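/- Let K ⊆ B_d be compact and n a positive integer. Suppose there is a closed half-sphere D ⊆ S^{d-1} with μ(K ∩ D) < 1/n. Then there exists δ₂ > 0 such that for any n closed half-spaces H₁, ..., Hₙ each containing the unit ball B_d, the intersection H₁ ∩ ... ∩ Hₙ contains a set of the form a + (1+δ₂)·A·K for some a ∈ ℝ^d and A ∈ O(d). -/

import Mathlib

set_option synthInstance.maxHeartbeats 1000000
set_option maxHeartbeats 2000000

open MeasureTheory Metric Set
open scoped RealInnerProductSpace ENNReal

section Aux

open scoped NNReal

variable {d : ℕ}

local notation "E" => EuclideanSpace ℝ (Fin d)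
local notation "OGd" => Matrix.orthogonalGroup (Fin d) ℝ

/-! ### Instances on the orthogonal group -/

instance stmt3_matSC (d : ℕ) : SecondCountableTopology (Matrix (Fin d) (Fin d) ℝ) :=
  inferInstanceAs (SecondCountableTopology ((Fin d) → (Fin d) → ℝ))

instance stmt3_ogSC (d : ℕ) :
    SecondCountableTopology ↥(Matrix.orthogonalGroup (Fin d) ℝ) :=
  inferInstanceAs (SecondCountableTopology
    ((Matrix.orthogonalGroup (Fin d) ℝ : Set (Matrix (Fin d) (Fin d) ℝ))))

noncomputable instance stmt3_ogMS (d : ℕ) :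
    MeasurableSpace ↥(Matrix.orthogonalGroup (Fin d) ℝ) := borel _

instance stmt3_ogBS (d : ℕ) : BorelSpace ↥(Matrix.orthogonalGroup (Fin d) ℝ) := ⟨rfl⟩

instance stmt3_ogTG (d : ℕ) : IsTopologicalGroup ↥(Matrix.orthogonalGroup (Fin d) ℝ) where
  continuous_inv := by
    apply continuous_induced_rng.2
    exact continuous_star.comp continuous_subtype_val

theorem stmt3_ogCompact (d : ℕ) :
    IsCompact {M : Matrix (Fin d) (Fin d) ℝ | M ∈ Matrix.orthogonalGroup (Fin d) ℝ} := by
  have hsub : {M : Matrix (Fin d) (Fin d) ℝ | M ∈ Matrix.orthogonalGroup (Fin d) ℝ} ⊆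
      (Set.univ.pi fun _ : Fin d => Set.univ.pi fun _ : Fin d => Icc (-1:ℝ) 1 :
        Set (Matrix (Fin d) (Fin d) ℝ)) := by
    intro M hM
    simp only [Set.mem_setOf_eq, Matrix.mem_orthogonalGroup_iff'] at hM
    intro i _
    intro j _
    have h1 : (star M * M) j j = 1 := by rw [show star M = M.transpose from Matrix.conjTranspose_eq_transpose_of_trivial M, hM]; simp
    rw [Matrix.mul_apply] at h1
    have h2 : ∀ k, (star M) j k * M k j = (M k j)^2 := by
      intro k; simp [Matrix.star_apply, sq, mul_comm]
    have h3 : (M i j)^2 ≤ 1 := by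
      calc (M i j)^2 ≤ ∑ k, (M k j)^2 :=
        Finset.single_le_sum (f := fun k => (M k j)^2) (fun k _ => sq_nonneg _) (Finset.mem_univ i)
      _ = 1 := by rw [← h1]; exact Finset.sum_congr rfl fun k _ => (h2 k).symm
    constructor
    · nlinarith [h3]
    · nlinarith [h3]
  have hcpt : IsCompact (Set.univ.pi fun _ : Fin d => Set.univ.pi fun _ : Fin d =>
      Icc (-1:ℝ) 1 : Set (Matrix (Fin d) (Fin d) ℝ)) :=
    isCompact_univ_pi fun _ => isCompact_univ_pi fun _ => isCompact_Icc
  refine IsCompact.of_isClosed_subset hcpt ?_ hsub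
  have hc : Continuous fun M : Matrix (Fin d) (Fin d) ℝ => star M * M :=
    Continuous.matrix_mul (continuous_id.matrix_conjTranspose) continuous_id
  have : {M : Matrix (Fin d) (Fin d) ℝ | M ∈ Matrix.orthogonalGroup (Fin d) ℝ} =
      (fun M : Matrix (Fin d) (Fin d) ℝ => star M * M) ⁻¹' {1} := by
    ext M; simp [Matrix.mem_orthogonalGroup_iff', Matrix.star_eq_conjTranspose, Matrix.conjTranspose_eq_transpose_of_trivial]
  rw [this]
  exact IsClosed.preimage hc isClosed_singleton

instance stmt3_ogCS (d : ℕ) : CompactSpace ↥(Matrix.orthogonalGroup (Fin d) ℝ) :=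
  isCompact_iff_compactSpace.mp (stmt3_ogCompact d)

/-! ### Right invariance of Haar measure on a compact group -/

theorem stmt3_haar_right_invariant {G : Type*} [Group G] [TopologicalSpace G]
    [IsTopologicalGroup G] [CompactSpace G] [T2Space G] [MeasurableSpace G] [BorelSpace G]
    (ν : Measure G) [ν.IsHaarMeasure] (g : G) :
    ν.map (· * g) = ν := by
  have hcont : Continuous (· * g) := continuous_mul_right g
  have hfin : IsFiniteMeasure ν := inferInstance
  set μ' : Measure G := ν.map (· * g) with hμ'
  have hμ'fin : IsFiniteMeasure μ' := by
    constructor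
    rw [hμ', Measure.map_apply hcont.measurable MeasurableSet.univ]
    simp [measure_lt_top]
  have hli : μ'.IsMulLeftInvariant := by
    constructor
    intro h
    rw [hμ', Measure.map_map (continuous_mul_left h).measurable hcont.measurable,
      show ((h * ·) ∘ (· * g)) = ((· * g) ∘ (h * ·)) by funext x; simp [mul_assoc],
      ← Measure.map_map hcont.measurable (continuous_mul_left h).measurable,
      map_mul_left_eq_self]
  have key : ∀ s : Set G, μ' s = μ'.haarScalarFactor ν • ν s := by
    intro s
    exact Measure.measure_isMulInvariant_eq_smul_of_isCompact_closure μ' ν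
      (isClosed_closure.isCompact)
  have huniv : μ' univ = ν univ := by
    rw [hμ', Measure.map_apply hcont.measurable MeasurableSet.univ]; simp
  have hνuniv0 : ν univ ≠ 0 := (NeZero.ne' (ν univ)).symm
  have hνunivtop : ν univ ≠ ⊤ := measure_ne_top ν univ
  have hc : ((μ'.haarScalarFactor ν : ℝ≥0) : ℝ≥0∞) = 1 := by
    have h0 := key univ
    rw [huniv, ENNReal.smul_def, smul_eq_mul] at h0
    nth_rewrite 1 [← one_mul (ν univ)] at h0
    exact ((ENNReal.mul_left_inj hνuniv0 hνunivtop).mp h0.symm)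
  ext s hs
  rw [key s, ENNReal.smul_def, smul_eq_mul, hc, one_mul]

/-! ### Algebra of the orthogonal group action on Euclidean space -/

theorem stmt3_toEL_mul (M N : Matrix (Fin d) (Fin d) ℝ) :
    Matrix.toEuclideanLin (M * N) =
      (Matrix.toEuclideanLin M).comp (Matrix.toEuclideanLin N) := by
  rw [Matrix.toEuclideanLin_eq_toLin_orthonormal,
    Matrix.toLin_mul _ (EuclideanSpace.basisFun (Fin d) ℝ).toBasis]

theorem stmt3_toEL_one :
    Matrix.toEuclideanLin (1 : Matrix (Fin d) (Fin d) ℝ) = LinearMap.id := by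
  apply LinearMap.ext; intro x
  rw [Matrix.toEuclideanLin_apply]
  simp

theorem stmt3_og_inner_move (A : ↥OGd) (x y : E) :
    ⟪Matrix.toEuclideanLin (A : Matrix (Fin d) (Fin d) ℝ) x, y⟫ =
      ⟪x, Matrix.toEuclideanLin ((A⁻¹ : ↥OGd) : Matrix (Fin d) (Fin d) ℝ) y⟫ := by
  have h1 : ((A⁻¹ : ↥OGd) : Matrix (Fin d) (Fin d) ℝ) =
      Matrix.conjTranspose (A : Matrix (Fin d) (Fin d) ℝ) := rfl
  rw [h1, Matrix.toEuclideanLin_conjTranspose_eq_adjoint, LinearMap.adjoint_inner_right]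

theorem stmt3_og_apply_apply (A B : ↥OGd) (x : E) :
    Matrix.toEuclideanLin (A : Matrix (Fin d) (Fin d) ℝ)
      (Matrix.toEuclideanLin (B : Matrix (Fin d) (Fin d) ℝ) x) =
      Matrix.toEuclideanLin ((A * B : ↥OGd) : Matrix (Fin d) (Fin d) ℝ) x := by
  have : ((A * B : ↥OGd) : Matrix (Fin d) (Fin d) ℝ) =
      (A : Matrix (Fin d) (Fin d) ℝ) * B := rfl
  rw [this, stmt3_toEL_mul]; rfl

theorem stmt3_og_inv_apply (A : ↥OGd) (x : E) :
    Matrix.toEuclideanLin ((A⁻¹ : ↥OGd) : Matrix (Fin d) (Fin d) ℝ)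
      (Matrix.toEuclideanLin (A : Matrix (Fin d) (Fin d) ℝ) x) = x := by
  rw [stmt3_og_apply_apply, inv_mul_cancel]
  have : ((1 : ↥OGd) : Matrix (Fin d) (Fin d) ℝ) = 1 := rfl
  rw [this, stmt3_toEL_one]; rfl

theorem stmt3_og_norm_map (A : ↥OGd) (x : E) :
    ‖Matrix.toEuclideanLin (A : Matrix (Fin d) (Fin d) ℝ) x‖ = ‖x‖ := by
  have h : ⟪Matrix.toEuclideanLin (A : Matrix (Fin d) (Fin d) ℝ) x,
      Matrix.toEuclideanLin (A : Matrix (Fin d) (Fin d) ℝ) x⟫ = ⟪x, x⟫ := by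
    rw [stmt3_og_inner_move, stmt3_og_inv_apply]
  have h1 := real_inner_self_eq_norm_sq
    (Matrix.toEuclideanLin (A : Matrix (Fin d) (Fin d) ℝ) x)
  have h2 := real_inner_self_eq_norm_sq x
  rw [h1, h2] at h
  nlinarith [norm_nonneg (Matrix.toEuclideanLin (A : Matrix (Fin d) (Fin d) ℝ) x),
    norm_nonneg x]

theorem stmt3_exists_og_map_eq (x y : E) (h : ‖x‖ = ‖y‖) :
    ∃ A : ↥OGd, Matrix.toEuclideanLin (A : Matrix (Fin d) (Fin d) ℝ) x = y := by
  set f := Submodule.reflection (ℝ ∙ (x - y))ᗮ with hf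
  set M := (Matrix.toEuclideanLin (𝕜 := ℝ) (m := Fin d) (n := Fin d)).symm
    (f.toLinearEquiv : E →ₗ[ℝ] E) with hM
  have hMf : Matrix.toEuclideanLin M = (f.toLinearEquiv : E →ₗ[ℝ] E) :=
    (Matrix.toEuclideanLin (𝕜 := ℝ)).apply_symm_apply _
  have hmem : M ∈ OGd := by
    rw [Matrix.mem_orthogonalGroup_iff']
    apply (Matrix.toEuclideanLin (𝕜 := ℝ) (m := Fin d) (n := Fin d)).injective
    have hstar : (M.transpose : Matrix (Fin d) (Fin d) ℝ) = Matrix.conjTranspose M :=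
      (Matrix.conjTranspose_eq_transpose_of_trivial M).symm
    rw [stmt3_toEL_mul, hstar, Matrix.toEuclideanLin_conjTranspose_eq_adjoint, hMf,
      stmt3_toEL_one]
    apply LinearMap.ext; intro z
    apply ext_inner_right ℝ; intro w
    rw [LinearMap.comp_apply, LinearMap.adjoint_inner_left]
    simp only [LinearIsometryEquiv.coe_toLinearEquiv, LinearMap.id_apply]
    exact f.inner_map_map z w
  refine ⟨⟨M, hmem⟩, ?_⟩
  show Matrix.toEuclideanLin M x = y
  rw [hMf]
  simpa using Submodule.reflection_sub h

theorem stmt3_continuous_action :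
    Continuous (fun p : ↥OGd × E =>
      Matrix.toEuclideanLin (p.1 : Matrix (Fin d) (Fin d) ℝ) p.2) := by
  have heq : (fun p : ↥OGd × E =>
      Matrix.toEuclideanLin (p.1 : Matrix (Fin d) (Fin d) ℝ) p.2) =
      fun p : ↥OGd × E => (EuclideanSpace.equiv (Fin d) ℝ).symm
        (Matrix.mulVec (p.1 : Matrix (Fin d) (Fin d) ℝ)
          ((EuclideanSpace.equiv (Fin d) ℝ) p.2)) := by
    funext p
    rw [Matrix.toEuclideanLin_apply]
    rfl
  rw [heq]
  apply Continuous.comp (EuclideanSpace.equiv (Fin d) ℝ).symm.continuous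
  apply Continuous.matrix_mulVec
  · exact continuous_subtype_val.comp continuous_fst
  · exact (EuclideanSpace.equiv (Fin d) ℝ).continuous.comp continuous_snd

/-! ### The distribution of `A • w` under Haar measure is `μ` -/

theorem stmt3_law (ν : Measure ↥OGd) [ν.IsHaarMeasure]
    (μ : Measure E) [IsProbabilityMeasure μ]
    (hsph : μ (sphere (0 : E) 1) = 1)
    (hinv : ∀ A ∈ Matrix.orthogonalGroup (Fin d) ℝ,
      μ.map (Matrix.toEuclideanLin A) = μ)
    (w : E) (hw : ‖w‖ = 1) (C : Set E) (hC : MeasurableSet C) :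
    ν {B : ↥OGd | Matrix.toEuclideanLin (B : Matrix (Fin d) (Fin d) ℝ) w ∈ C}
      = ν univ * μ C := by
  have hψ : Continuous fun p : ↥OGd × E =>
      Matrix.toEuclideanLin (p.1 : Matrix (Fin d) (Fin d) ℝ) p.2 := stmt3_continuous_action
  have hφB : ∀ B : ↥OGd,
      Measurable fun x : E => Matrix.toEuclideanLin (B : Matrix (Fin d) (Fin d) ℝ) x :=
    fun B => (hψ.comp (continuous_const.prodMk continuous_id)).measurable
  have hφw : ∀ x : E,
      Measurable fun B : ↥OGd => Matrix.toEuclideanLin (B : Matrix (Fin d) (Fin d) ℝ) x :=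
    fun x => (hψ.comp (continuous_id.prodMk continuous_const)).measurable
  have hSBmeas : ∀ x : E, MeasurableSet
      {B : ↥OGd | Matrix.toEuclideanLin (B : Matrix (Fin d) (Fin d) ℝ) x ∈ C} :=
    fun x => (hφw x) hC
  -- the double integral
  have hf : AEMeasurable
      (Function.uncurry fun (B : ↥OGd) (x : E) =>
        C.indicator (fun _ => (1:ℝ≥0∞)) (Matrix.toEuclideanLin (B : Matrix (Fin d) (Fin d) ℝ) x))
      (ν.prod μ) := by
    apply Measurable.aemeasurable
    exact (measurable_const.indicator hC).comp hψ.measurable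
  have hswap := lintegral_lintegral_swap hf
  -- LHS : each inner integral equals μ C
  have hinner1 : ∀ B : ↥OGd, ∫⁻ x, C.indicator (fun _ => (1:ℝ≥0∞))
      (Matrix.toEuclideanLin (B : Matrix (Fin d) (Fin d) ℝ) x) ∂μ = μ C := by
    intro B
    have hcomp : (fun x : E => C.indicator (fun _ => (1:ℝ≥0∞))
        (Matrix.toEuclideanLin (B : Matrix (Fin d) (Fin d) ℝ) x)) =
        ((Matrix.toEuclideanLin (B : Matrix (Fin d) (Fin d) ℝ) ⁻¹' C).indicator
          (fun _ => (1:ℝ≥0∞))) := by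
      funext x
      by_cases hx : Matrix.toEuclideanLin (B : Matrix (Fin d) (Fin d) ℝ) x ∈ C <;>
        simp [Set.indicator, hx]
    rw [hcomp]
    rw [show (lintegral μ (((Matrix.toEuclideanLin (B : Matrix (Fin d) (Fin d) ℝ)) ⁻¹' C).indicator
      (fun _ => (1:ℝ≥0∞)))) = μ ((Matrix.toEuclideanLin (B : Matrix (Fin d) (Fin d) ℝ)) ⁻¹' C)
      from lintegral_indicator_one ((hφB B) hC)]
    have := hinv (B : Matrix (Fin d) (Fin d) ℝ) B.2
    conv_rhs => rw [← this]
    rw [Measure.map_apply (hφB B) hC]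
  have hLHS : ∫⁻ B, (∫⁻ x, C.indicator (fun _ => (1:ℝ≥0∞))
      (Matrix.toEuclideanLin (B : Matrix (Fin d) (Fin d) ℝ) x) ∂μ) ∂ν = μ C * ν univ := by
    rw [lintegral_congr hinner1, lintegral_const]
  -- RHS : inner integrals
  have hinner2 : ∀ x : E, ∫⁻ B, C.indicator (fun _ => (1:ℝ≥0∞))
      (Matrix.toEuclideanLin (B : Matrix (Fin d) (Fin d) ℝ) x) ∂ν =
      ν {B : ↥OGd | Matrix.toEuclideanLin (B : Matrix (Fin d) (Fin d) ℝ) x ∈ C} := by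
    intro x
    have hcomp : (fun B : ↥OGd => C.indicator (fun _ => (1:ℝ≥0∞))
        (Matrix.toEuclideanLin (B : Matrix (Fin d) (Fin d) ℝ) x)) =
        ({B : ↥OGd | Matrix.toEuclideanLin (B : Matrix (Fin d) (Fin d) ℝ) x ∈ C}.indicator
          (fun _ => (1:ℝ≥0∞))) := by
      funext B
      by_cases hx : Matrix.toEuclideanLin (B : Matrix (Fin d) (Fin d) ℝ) x ∈ C <;>
        simp [Set.indicator, hx]
    rw [hcomp]
    exact lintegral_indicator_one (hSBmeas x)
  -- constancy on the sphere
  have hconst : ∀ x : E, ‖x‖ = 1 →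
      ν {B : ↥OGd | Matrix.toEuclideanLin (B : Matrix (Fin d) (Fin d) ℝ) x ∈ C} =
      ν {B : ↥OGd | Matrix.toEuclideanLin (B : Matrix (Fin d) (Fin d) ℝ) w ∈ C} := by
    intro x hx
    obtain ⟨R, hR⟩ := stmt3_exists_og_map_eq w x (by rw [hw, hx])
    have hset : {B : ↥OGd | Matrix.toEuclideanLin (B : Matrix (Fin d) (Fin d) ℝ) x ∈ C} =
        (· * R) ⁻¹'
          {B : ↥OGd | Matrix.toEuclideanLin (B : Matrix (Fin d) (Fin d) ℝ) w ∈ C} := by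
      ext B
      simp only [Set.mem_setOf_eq, Set.mem_preimage]
      rw [← hR, stmt3_og_apply_apply]
    rw [hset, ← Measure.map_apply (continuous_mul_right R).measurable (hSBmeas w),
      stmt3_haar_right_invariant ν R]
  -- a.e. equality
  have hsphm : MeasurableSet (sphere (0 : E) 1) := isClosed_sphere.measurableSet
  have hcompl : μ ((sphere (0 : E) 1)ᶜ) = 0 := by
    rw [measure_compl hsphm (measure_ne_top μ _), hsph, measure_univ, tsub_self]
  have hae : ∀ᵐ x ∂μ, x ∈ sphere (0 : E) 1 := by
    rw [MeasureTheory.ae_iff]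
    exact hcompl
  have hRHS : ∫⁻ x, (∫⁻ B, C.indicator (fun _ => (1:ℝ≥0∞))
      (Matrix.toEuclideanLin (B : Matrix (Fin d) (Fin d) ℝ) x) ∂ν) ∂μ =
      ν {B : ↥OGd | Matrix.toEuclideanLin (B : Matrix (Fin d) (Fin d) ℝ) w ∈ C} := by
    have : ∫⁻ x, (∫⁻ B, C.indicator (fun _ => (1:ℝ≥0∞))
        (Matrix.toEuclideanLin (B : Matrix (Fin d) (Fin d) ℝ) x) ∂ν) ∂μ =
        ∫⁻ _, ν {B : ↥OGd |
          Matrix.toEuclideanLin (B : Matrix (Fin d) (Fin d) ℝ) w ∈ C} ∂μ := by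
      apply lintegral_congr_ae
      filter_upwards [hae] with x hx
      rw [hinner2 x]
      exact hconst x (by simpa [mem_sphere_iff_norm] using hx)
    rw [this, lintegral_const, measure_univ, mul_one]
  rw [hswap, hRHS] at hLHS
  exact hLHS.trans (mul_comm _ _)

/-! ### Closedness of the bad set -/

theorem stmt3_closed_bad (K : Set E) (hKc : IsCompact K) (u : E) (ε t : ℝ) :
    IsClosed {w : E | ‖w‖ = 1 ∧ -ε ≤ ⟪w, u⟫ ∧ ∃ y ∈ K, t ≤ ⟪y, w⟫} := by
  have h1 : IsClosed {w : E | ‖w‖ = 1} := isClosed_eq continuous_norm continuous_const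
  have h2 : IsClosed {w : E | -ε ≤ ⟪w, u⟫} :=
    isClosed_le continuous_const (continuous_id.inner continuous_const)
  have h3 : IsClosed {w : E | ∃ y ∈ K, t ≤ ⟪y, w⟫} := by
    apply IsSeqClosed.isClosed
    intro ws w hmem hws
    choose y hyK hy using hmem
    obtain ⟨z, hzK, φ, hφ, hz⟩ := hKc.tendsto_subseq hyK
    refine ⟨z, hzK, ?_⟩
    have hlim : Filter.Tendsto (fun k => ⟪y (φ k), ws (φ k)⟫) Filter.atTop (nhds ⟪z, w⟫) :=
      hz.inner (hws.comp hφ.tendsto_atTop)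
    exact ge_of_tendsto hlim (Filter.Eventually.of_forall fun k => hy (φ k))
  have hset : {w : E | ‖w‖ = 1 ∧ -ε ≤ ⟪w, u⟫ ∧ ∃ y ∈ K, t ≤ ⟪y, w⟫} =
      {w : E | ‖w‖ = 1} ∩ ({w : E | -ε ≤ ⟪w, u⟫} ∩ {w : E | ∃ y ∈ K, t ≤ ⟪y, w⟫}) := by
    ext x; simp [Set.mem_setOf_eq, and_assoc]
  rw [hset]
  exact h1.inter (h2.inter h3)

/-! ### Avoiding a small bad set by a rotation -/

theorem stmt3_avoid {n : ℕ} (hn : 0 < n) (μ : Measure E) [IsProbabilityMeasure μ]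
    (hsph : μ (sphere (0 : E) 1) = 1)
    (hinv : ∀ A ∈ Matrix.orthogonalGroup (Fin d) ℝ,
      μ.map (Matrix.toEuclideanLin A) = μ)
    (C : Set E) (hC : MeasurableSet C) (hμC : μ C < 1 / n)
    (w : Fin n → E) (hw : ∀ i, ‖w i‖ = 1) :
    ∃ B : ↥OGd, ∀ i,
      Matrix.toEuclideanLin (B : Matrix (Fin d) (Fin d) ℝ) (w i) ∉ C := by
  set ν : Measure ↥OGd := Measure.haar with hν
  haveI : ν.IsHaarMeasure := inferInstanceAs ((Measure.haar : Measure ↥OGd).IsHaarMeasure)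
  haveI : IsFiniteMeasure ν := inferInstance
  by_contra hcon
  push_neg at hcon
  have hcover : (Set.univ : Set ↥OGd) ⊆ ⋃ i, {B : ↥OGd |
      Matrix.toEuclideanLin (B : Matrix (Fin d) (Fin d) ℝ) (w i) ∈ C} := by
    intro B _
    obtain ⟨i, hi⟩ := hcon B
    exact Set.mem_iUnion.mpr ⟨i, hi⟩
  have hle : ν univ ≤ ∑ i : Fin n, ν {B : ↥OGd |
      Matrix.toEuclideanLin (B : Matrix (Fin d) (Fin d) ℝ) (w i) ∈ C} := by
    calc ν univ ≤ ν (⋃ i, {B : ↥OGd |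
        Matrix.toEuclideanLin (B : Matrix (Fin d) (Fin d) ℝ) (w i) ∈ C}) :=
      measure_mono hcover
    _ ≤ ∑' i : Fin n, ν {B : ↥OGd |
        Matrix.toEuclideanLin (B : Matrix (Fin d) (Fin d) ℝ) (w i) ∈ C} :=
      measure_iUnion_le _
    _ = ∑ i : Fin n, ν {B : ↥OGd |
        Matrix.toEuclideanLin (B : Matrix (Fin d) (Fin d) ℝ) (w i) ∈ C} := tsum_fintype _
  have hlaw : ∀ i, ν {B : ↥OGd |
      Matrix.toEuclideanLin (B : Matrix (Fin d) (Fin d) ℝ) (w i) ∈ C} = ν univ * μ C :=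
    fun i => stmt3_law ν μ hsph hinv (w i) (hw i) C hC
  have hsum : ∑ i : Fin n, ν {B : ↥OGd |
      Matrix.toEuclideanLin (B : Matrix (Fin d) (Fin d) ℝ) (w i) ∈ C} =
      (n : ℝ≥0∞) * (ν univ * μ C) := by
    rw [Finset.sum_congr rfl fun i _ => hlaw i]
    simp [Finset.sum_const, nsmul_eq_mul]
  have hν0 : ν univ ≠ 0 := (NeZero.ne' (ν univ)).symm
  have hνtop : ν univ ≠ ⊤ := measure_ne_top ν univ
  have hnμ : (n : ℝ≥0∞) * μ C < 1 := by
    have hn0 : (n : ℝ≥0∞) ≠ 0 := Nat.cast_ne_zero.mpr hn.ne'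
    have hntop : (n : ℝ≥0∞) ≠ ⊤ := ENNReal.natCast_ne_top n
    calc (n : ℝ≥0∞) * μ C < (n : ℝ≥0∞) * (1 / n) := by
          rw [ENNReal.mul_lt_mul_iff_right hn0 hntop]; exact hμC
    _ = 1 := by rw [one_div, ENNReal.mul_inv_cancel hn0 hntop]
  have hcontra : (n : ℝ≥0∞) * (ν univ * μ C) < ν univ := by
    calc (n : ℝ≥0∞) * (ν univ * μ C) = ν univ * ((n : ℝ≥0∞) * μ C) := by ring
    _ < ν univ * 1 := by rw [ENNReal.mul_lt_mul_iff_right hν0 hνtop]; exact hnμ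
    _ = ν univ := mul_one _
  rw [hsum] at hle
  exact absurd (lt_of_le_of_lt hle hcontra) (lt_irrefl _)

end Aux

/-- Let K ⊆ B_d be compact with a closed half-sphere D ⊆ S^{d-1} such that
μ(K ∩ D) < 1/n.  Then there is δ₂ > 0 such that the intersection of any n closed
half-spaces containing B_d contains a + (1+δ₂)·A·K for some a ∈ ℝ^d, A ∈ O(d). -/
theorem stmt3 (d n : ℕ) (hn : 0 < n)
    (μ : Measure (EuclideanSpace ℝ (Fin d))) [IsProbabilityMeasure μ]
    (hsph : μ (sphere (0 : EuclideanSpace ℝ (Fin d)) 1) = 1)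
    (hinv : ∀ A ∈ Matrix.orthogonalGroup (Fin d) ℝ,
      μ.map (Matrix.toEuclideanLin A) = μ)
    (K : Set (EuclideanSpace ℝ (Fin d))) (hKc : IsCompact K)
    (hKB : K ⊆ closedBall (0 : EuclideanSpace ℝ (Fin d)) 1)
    (u : EuclideanSpace ℝ (Fin d)) (hu : ‖u‖ = 1)
    (hμK : μ (K ∩ {x ∈ sphere (0 : EuclideanSpace ℝ (Fin d)) 1 | 0 ≤ ⟪x, u⟫}) < 1 / n) :
    ∃ δ₂ : ℝ, 0 < δ₂ ∧
      ∀ (v : Fin n → EuclideanSpace ℝ (Fin d)) (c : Fin n → ℝ),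
        (∀ i, closedBall (0 : EuclideanSpace ℝ (Fin d)) 1 ⊆ {x | ⟪x, v i⟫ ≤ c i}) →
        ∃ (a : EuclideanSpace ℝ (Fin d)), ∃ A ∈ Matrix.orthogonalGroup (Fin d) ℝ,
          (fun y => a + (1 + δ₂) • Matrix.toEuclideanLin A y) '' K ⊆
            ⋂ i, {x : EuclideanSpace ℝ (Fin d) | ⟪x, v i⟫ ≤ c i} := by
  classical
  -- the decreasing family of "bad" closed sets on the sphere
  set Cm : ℕ → Set (EuclideanSpace ℝ (Fin d)) := fun m =>
    {w : EuclideanSpace ℝ (Fin d) | ‖w‖ = 1 ∧ -(1/((m:ℝ)+1)) ≤ ⟪w, u⟫ ∧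
      ∃ y ∈ K, 1/(1 + 1/((m:ℝ)+1)) ≤ ⟪y, w⟫} with hCmdef
  have hCmclosed : ∀ m, IsClosed (Cm m) := fun m => stmt3_closed_bad K hKc u _ _
  have hCmanti : Antitone Cm := by
    intro m m' hmm' x hx
    obtain ⟨h1, h2, y, hyK, h3⟩ := hx
    have hmono : 1/((m':ℝ)+1) ≤ 1/((m:ℝ)+1) := by
      apply one_div_le_one_div_of_le (by positivity)
      exact_mod_cast add_le_add_left (Nat.cast_le.mpr hmm') 1
    refine ⟨h1, by linarith, y, hyK, ?_⟩
    have : 1/(1 + 1/((m:ℝ)+1)) ≤ 1/(1 + 1/((m':ℝ)+1)) := by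
      apply one_div_le_one_div_of_le
      · positivity
      · linarith
    linarith
  have hiInter : (⋂ m, Cm m) ⊆
      K ∩ {x ∈ sphere (0 : EuclideanSpace ℝ (Fin d)) 1 | 0 ≤ ⟪x, u⟫} := by
    intro w hw
    simp only [Set.mem_iInter] at hw
    have h1 : ‖w‖ = 1 := (hw 0).1
    have h2 : 0 ≤ ⟪w, u⟫ := by
      by_contra hneg
      push_neg at hneg
      obtain ⟨m, hm⟩ := exists_nat_one_div_lt (show (0:ℝ) < -⟪w, u⟫ by linarith)
      have := (hw m).2.1
      linarith
    have h3 : w ∈ K := by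
      choose y hyK hy using fun m => (hw m).2.2
      obtain ⟨z, hzK, φ, hφ, hz⟩ := hKc.tendsto_subseq hyK
      have hone : (1:ℝ) ≤ ⟪z, w⟫ := by
        have hlimb : Filter.Tendsto (fun k => ⟪y (φ k), w⟫) Filter.atTop (nhds ⟪z, w⟫) :=
          hz.inner tendsto_const_nhds
        have hlima : Filter.Tendsto (fun k : ℕ => 1 - 1/((k:ℝ)+1)) Filter.atTop (nhds 1) := by
          have := tendsto_one_div_add_atTop_nhds_zero_nat (𝕜 := ℝ)
          have h := Filter.Tendsto.sub (tendsto_const_nhds (x := (1:ℝ))) this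
          simpa using h
        refine le_of_tendsto_of_tendsto' hlima hlimb ?_
        intro k
        have hk1 : ((k:ℝ)+1) ≤ ((φ k : ℝ)+1) := by
          exact_mod_cast add_le_add_left (Nat.cast_le.mpr (hφ.le_apply)) 1
        have hφk : 1/((φ k:ℝ)+1) ≤ 1/((k:ℝ)+1) :=
          one_div_le_one_div_of_le (by positivity) hk1
        have hyk := hy (φ k)
        have hpos : (0:ℝ) < (φ k : ℝ) + 1 := by positivity
        have hpos2 : (0:ℝ) < 1 + 1/((φ k:ℝ)+1) := by positivity
        have hineq : 1 - 1/((φ k:ℝ)+1) ≤ 1/(1 + 1/((φ k:ℝ)+1)) := by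
          rw [le_div_iff₀ hpos2]
          have hsq : (1/((φ k:ℝ)+1))^2 ≥ 0 := sq_nonneg _
          field_simp
          nlinarith [sq_nonneg ((φ k:ℝ))]
        calc 1 - 1/((k:ℝ)+1) ≤ 1 - 1/((φ k:ℝ)+1) := by linarith
        _ ≤ 1/(1 + 1/((φ k:ℝ)+1)) := hineq
        _ ≤ ⟪y (φ k), w⟫ := hyk
      have hzn : ‖z‖ ≤ 1 := by
        have := hKB hzK
        rwa [mem_closedBall_zero_iff] at this
      have hCS : ⟪z, w⟫ ≤ ‖z‖ * ‖w‖ := real_inner_le_norm z w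
      have hsq : ‖z - w‖^2 = ‖z‖^2 - 2*⟪z, w⟫ + ‖w‖^2 := by
        rw [@norm_sub_sq_real]
      have hzw : z = w := by
        have h0 : ‖z - w‖^2 ≤ 0 := by
          rw [hsq, h1]
          nlinarith
        have : ‖z - w‖ = 0 := by nlinarith [norm_nonneg (z - w), sq_nonneg ‖z - w‖]
        rwa [norm_sub_eq_zero_iff] at this
      rwa [hzw] at hzK
    exact ⟨h3, by rw [Set.mem_setOf_eq, mem_sphere_zero_iff_norm]; exact ⟨h1, h2⟩⟩
  -- continuity from above gives a good index m
  have hμiInf : ⨅ m, μ (Cm m) < 1 / n := by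
    have heq : μ (⋂ m, Cm m) = ⨅ m, μ (Cm m) :=
      hCmanti.measure_iInter
        (fun m => ((hCmclosed m).measurableSet).nullMeasurableSet)
        ⟨0, measure_ne_top μ _⟩
    calc ⨅ m, μ (Cm m) = μ (⋂ m, Cm m) := heq.symm
    _ ≤ μ (K ∩ {x ∈ sphere (0 : EuclideanSpace ℝ (Fin d)) 1 | 0 ≤ ⟪x, u⟫}) :=
      measure_mono hiInter
    _ < 1 / n := hμK
  obtain ⟨m, hm⟩ := iInf_lt_iff.mp hμiInf
  set ε : ℝ := 1/((m:ℝ)+1) with hεdef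
  have hε0 : 0 < ε := by positivity
  have hε1 : ε ≤ 1 := by
    rw [hεdef]
    rw [div_le_one (by positivity)]
    linarith [Nat.cast_nonneg (α := ℝ) m]
  refine ⟨ε^2/64, by positivity, ?_⟩
  intro v c hvc
  -- unit normal vectors
  set w : Fin n → EuclideanSpace ℝ (Fin d) := fun i =>
    if h : v i = 0 then u else ‖v i‖⁻¹ • v i with hwdef
  have hwnorm : ∀ i, ‖w i‖ = 1 := by
    intro i
    rw [hwdef]
    by_cases h : v i = 0
    · simp [h, hu]
    · have hv0 : ‖v i‖ ≠ 0 := norm_ne_zero_iff.mpr h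
      simp [h, norm_smul, abs_of_nonneg (inv_nonneg.mpr (norm_nonneg (v i))),
        inv_mul_cancel₀ hv0]
  obtain ⟨B, hB⟩ := stmt3_avoid hn μ hsph hinv (Cm m) (hCmclosed m).measurableSet hm w hwnorm
  refine ⟨(ε/8) • Matrix.toEuclideanLin ((B⁻¹ :
      ↥(Matrix.orthogonalGroup (Fin d) ℝ)) : Matrix (Fin d) (Fin d) ℝ) u,
    ((B⁻¹ : ↥(Matrix.orthogonalGroup (Fin d) ℝ)) : Matrix (Fin d) (Fin d) ℝ),
    (B⁻¹ : ↥(Matrix.orthogonalGroup (Fin d) ℝ)).2, ?_⟩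
  rintro x ⟨y, hyK, rfl⟩
  simp only [Set.mem_iInter, Set.mem_setOf_eq]
  intro i
  by_cases hvi : v i = 0
  · rw [hvi, inner_zero_right]
    have h0 := hvc i (mem_closedBall_self zero_le_one)
    rw [Set.mem_setOf_eq, hvi, inner_zero_right] at h0
    exact h0
  · -- main case
    set z := Matrix.toEuclideanLin ((B :
      ↥(Matrix.orthogonalGroup (Fin d) ℝ)) : Matrix (Fin d) (Fin d) ℝ) (w i) with hzdef
    have hznorm : ‖z‖ = 1 := by rw [hzdef, stmt3_og_norm_map]; exact hwnorm i
    have hvnorm : 0 < ‖v i‖ := norm_pos_iff.mpr hvi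
    have hvw : v i = ‖v i‖ • w i := by
      rw [hwdef]
      simp only [hvi, dif_neg, not_false_iff]
      rw [smul_smul, mul_inv_cancel₀ hvnorm.ne', one_smul]
    have hci : ‖v i‖ ≤ c i := by
      have hmem : w i ∈ closedBall (0 : EuclideanSpace ℝ (Fin d)) 1 := by
        rw [mem_closedBall_zero_iff, hwnorm i]
      have hthis := hvc i hmem
      rw [Set.mem_setOf_eq] at hthis
      have hinner : ⟪w i, v i⟫ = ‖v i‖ := by
        conv_lhs => rw [hvw]
        rw [real_inner_smul_right, real_inner_self_eq_norm_sq, hwnorm i]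
        simp
      linarith [hthis, hinner.ge, hinner.le]
    -- inner product identities
    have hmove : ∀ x : EuclideanSpace ℝ (Fin d),
        ⟪Matrix.toEuclideanLin ((B⁻¹ :
          ↥(Matrix.orthogonalGroup (Fin d) ℝ)) : Matrix (Fin d) (Fin d) ℝ) x, w i⟫ =
        ⟪x, z⟫ := by
      intro x
      have := stmt3_og_inner_move (B⁻¹) x (w i)
      rwa [inv_inv] at this
    have hyz : ⟪y, z⟫ ≤ 1 := by
      have h1 : ⟪y, z⟫ ≤ ‖y‖ * ‖z‖ := real_inner_le_norm y z
      have h2 : ‖y‖ ≤ 1 := by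
        have := hKB hyK; rwa [mem_closedBall_zero_iff] at this
      nlinarith
    have huz : |⟪u, z⟫| ≤ 1 := by
      have := abs_real_inner_le_norm u z
      rwa [hu, hznorm, one_mul] at this
    -- expand the inner product
    have hexpand : ⟪(ε/8) • Matrix.toEuclideanLin ((B⁻¹ :
        ↥(Matrix.orthogonalGroup (Fin d) ℝ)) : Matrix (Fin d) (Fin d) ℝ) u +
        (1 + ε^2/64) • Matrix.toEuclideanLin ((B⁻¹ :
        ↥(Matrix.orthogonalGroup (Fin d) ℝ)) : Matrix (Fin d) (Fin d) ℝ) y, v i⟫ =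
        ‖v i‖ * ((ε/8) * ⟪u, z⟫ + (1 + ε^2/64) * ⟪y, z⟫) := by
      rw [inner_add_left, real_inner_smul_left, real_inner_smul_left]
      nth_rewrite 1 [hvw]
      nth_rewrite 2 [hvw]
      rw [real_inner_smul_right, real_inner_smul_right, hmove u, hmove y]
      ring
    rw [hexpand]
    -- use that z avoids the bad set
    have hznot : z ∉ Cm m := hB i
    have hkey : (ε/8) * ⟪u, z⟫ + (1 + ε^2/64) * ⟪y, z⟫ ≤ 1 := by
      by_cases hcase : -ε ≤ ⟪z, u⟫
      · -- then no point of K has large inner product with z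
        have hsmall : ⟪y, z⟫ < 1/(1+ε) := by
          by_contra hcon
          push_neg at hcon
          apply hznot
          rw [hCmdef]
          refine ⟨hznorm, ?_, y, hyK, ?_⟩
          · rw [← hεdef]; exact hcase
          · rw [← hεdef]; exact hcon
        have huz' : ⟪u, z⟫ ≤ 1 := (abs_le.mp huz).2
        have hpos : (0:ℝ) < 1 + ε := by linarith
        have h2 : (1 + ε^2/64) * ⟪y, z⟫ ≤ (1 + ε^2/64) * (1/(1+ε)) := by
          apply mul_le_mul_of_nonneg_left (le_of_lt hsmall)
          positivity
        have h3 : (1 + ε^2/64) * (1/(1+ε)) ≤ 1 - ε/4 := by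
          rw [mul_one_div, div_le_iff₀ hpos]
          nlinarith
        nlinarith
      · push_neg at hcase
        have huz2 : ⟪u, z⟫ < -ε := by rwa [real_inner_comm]
        have h1 : (ε/8) * ⟪u, z⟫ ≤ (ε/8) * (-ε) :=
          mul_le_mul_of_nonneg_left (le_of_lt huz2) (by positivity)
        nlinarith
    calc ‖v i‖ * ((ε/8) * ⟪u, z⟫ + (1 + ε^2/64) * ⟪y, z⟫) ≤ ‖v i‖ * 1 :=
      mul_le_mul_of_nonneg_left hkey (norm_nonneg _)
    _ = ‖v i‖ := mul_one _
    _ ≤ c i := hci
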